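/- Let N be a positive integer. Then for every τ ∈ ℍ, with q = e^{2πiτ}: (N/(2πi))·( N·η′(Nτ)/η(Nτ) − η′(τ)/η(τ) ) = N(N−1)/24 + N·∑_{k≥1} σ₁(k)(q^k − N·q^{Nk}), where η′ denotes the complex derivative of η. That is, the weight-two form Λ_N(τ) = N·q(d/dq)log(η(Nτ)/η(τ)) has the stated Lambert-type q-expansion. -/

import Mathlib

/-- `q = e^{2πiτ}`. -/
noncomputable def qc (τ : ℂ) : ℂ := Complex.exp (2 * Real.pi * Complex.I * τ)

/-- The Dedekind eta function `η(τ) = e^{πiτ/12} ∏_{n ≥ 1} (1 - q^n)`. -/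
noncomputable def eta (τ : ℂ) : ℂ :=
  Complex.exp (Real.pi * Complex.I * τ / 12) * ∏' n : ℕ, (1 - qc τ ^ (n + 1))

/-- `σ₁(k)`, the sum of the divisors of `k`. -/
def sigma1 (k : ℕ) : ℕ := ∑ d ∈ k.divisors, d

namespace Stmt9
open Complex Filter Real


lemma norm_qc (τ : ℂ) : ‖qc τ‖ = Real.exp (-(2 * Real.pi * τ.im)) := by
  rw [qc, Complex.norm_exp]
  congr 1
  simp [Complex.mul_re, Complex.mul_im]

lemma norm_qc_lt_one {τ : ℂ} (hτ : 0 < τ.im) : ‖qc τ‖ < 1 := by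
  rw [norm_qc]
  apply Real.exp_lt_one_iff.mpr
  have := Real.pi_pos
  nlinarith

lemma one_sub_mem {w : ℂ} (hw : ‖w‖ < 1) : 1 - w ∈ Complex.slitPlane := by
  rw [Complex.mem_slitPlane_iff]
  left
  have h := Complex.abs_re_le_norm w
  simp only [Complex.sub_re, Complex.one_re]
  have := abs_le.1 h
  linarith [this.2]

lemma one_sub_ne {w : ℂ} (hw : ‖w‖ < 1) : 1 - w ≠ 0 :=
  Complex.slitPlane_ne_zero (one_sub_mem hw)

lemma norm_one_sub_ge {w : ℂ} : 1 - ‖w‖ ≤ ‖1 - w‖ := by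
  have := norm_sub_norm_le (1 : ℂ) w
  simpa using this

lemma summable_log {q : ℂ} (hq : ‖q‖ < 1) :
    Summable fun n : ℕ => Complex.log (1 - q ^ (n + 1)) := by
  apply Summable.of_norm_bounded_eventually_nat (g := fun n => 3 / 2 * ‖q‖ ^ (n + 1))
  · apply Summable.congr (f := fun n => (3 / 2 * ‖q‖) * ‖q‖ ^ n)
    · exact (summable_geometric_of_lt_one (norm_nonneg q) hq).mul_left _
    · intro n; rw [pow_succ]; ring
  · have h0 : Filter.Tendsto (fun n : ℕ => ‖q‖ ^ (n + 1)) atTop (nhds 0) := by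
      have := tendsto_pow_atTop_nhds_zero_of_lt_one (norm_nonneg q) hq
      exact this.comp (tendsto_add_atTop_nat 1)
    filter_upwards [h0.eventually (gt_mem_nhds (by norm_num : (0:ℝ) < 1/2))] with n hn
    have h2 : ‖-(q ^ (n + 1))‖ ≤ 1 / 2 := by
      rw [norm_neg, norm_pow]; linarith
    have := Complex.norm_log_one_add_half_le_self h2
    rw [← sub_eq_add_neg] at this
    simpa [norm_pow] using this



lemma sigma1_le (m : ℕ) : sigma1 m ≤ m * m := by
  calc sigma1 m ≤ ∑ _d ∈ m.divisors, m :=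
        Finset.sum_le_sum fun d hd => Nat.divisor_le hd
    _ = m.divisors.card * m := by rw [Finset.sum_const, smul_eq_mul]
    _ ≤ m * m := by
        apply Nat.mul_le_mul_right
        have : m.divisors.card ≤ (Finset.Ico 1 (m + 1)).card := by
          rw [Nat.divisors]
          exact Finset.card_filter_le _ _
        simpa using this

set_option maxHeartbeats 1000000 in
lemma summable_sigma_mul {q : ℂ} (hq : ‖q‖ < 1) :
    Summable fun k : ℕ => (sigma1 (k + 1) : ℂ) * q ^ (k + 1) := by
  have h : Summable fun n : ℕ => (n : ℝ) ^ 2 * ‖q‖ ^ n :=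
    summable_pow_mul_geometric_of_norm_lt_one 2 (by simpa using hq)
  have hs : Summable fun k : ℕ => ((k + 1 : ℕ) : ℝ) ^ 2 * ‖q‖ ^ (k + 1) :=
    (summable_nat_add_iff 1).mpr h
  apply Summable.of_norm_bounded hs
  intro k
  rw [norm_mul, norm_pow]
  have h1 : ‖((sigma1 (k + 1) : ℂ))‖ = (sigma1 (k + 1) : ℝ) := by
    simp
  rw [h1]
  apply mul_le_mul_of_nonneg_right _ (by positivity)
  have := sigma1_le (k + 1)
  have h2 : (sigma1 (k + 1) : ℝ) ≤ ((k + 1 : ℕ) : ℝ) * ((k + 1 : ℕ) : ℝ) := by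
    exact_mod_cast this
  nlinarith [h2]






section Lambert

variable {q : ℂ} (hq : ‖q‖ < 1)

private def F (q : ℂ) : ℕ × ℕ → ℂ := fun p => ((p.1 + 1 : ℕ) : ℂ) * q ^ ((p.1 + 1) * (p.2 + 1))

private def G (q : ℂ) : ℕ × ℕ → ℂ := fun p =>
  if p.2 = 0 then 0 else (p.1 : ℂ) * q ^ (p.1 * p.2)

include hq

lemma summable_F : Summable (F q) := by
  apply Summable.of_norm
  have hnorm : ∀ p : ℕ × ℕ, ‖F q p‖ = ((p.1 + 1 : ℕ) : ℝ) * ‖q‖ ^ ((p.1 + 1) * (p.2 + 1)) := by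
    intro p
    rw [F, norm_mul, norm_pow, Complex.norm_natCast]
  rw [summable_prod_of_nonneg (fun p => norm_nonneg _)]
  have hrow : ∀ n : ℕ, Summable fun m => ‖F q (n, m)‖ := by
    intro n
    apply Summable.congr (f := fun m => ((n + 1 : ℕ) : ℝ) * (‖q‖ ^ (n + 1)) ^ (m + 1))
    · apply Summable.mul_left
      apply Summable.comp_injective (i := fun m : ℕ => m + 1)
        ((summable_geometric_of_lt_one (by positivity)
          (pow_lt_one₀ (norm_nonneg q) hq (Nat.succ_ne_zero n))))
      exact add_left_injective 1
    · intro m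
      rw [hnorm (n, m), ← pow_mul]
  refine ⟨hrow, ?_⟩
  have hbound : ∀ n : ℕ, ∑' m, ‖F q (n, m)‖ ≤
      ((n + 1 : ℕ) : ℝ) * ‖q‖ ^ (n + 1) * (1 - ‖q‖)⁻¹ := by
    intro n
    have hw : ‖q‖ ^ (n + 1) < 1 := pow_lt_one₀ (norm_nonneg q) hq (Nat.succ_ne_zero n)
    have hcalc : ∑' m, ‖F q (n, m)‖ =
        ((n + 1 : ℕ) : ℝ) * ‖q‖ ^ (n + 1) * (1 - ‖q‖ ^ (n + 1))⁻¹ := by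
      have : ∀ m : ℕ, ‖F q (n, m)‖ = ((n + 1 : ℕ) : ℝ) * (‖q‖ ^ (n + 1)) ^ (m + 1) := by
        intro m
        rw [hnorm (n, m), ← pow_mul]
      rw [tsum_congr this, tsum_mul_left]
      have hgs : ∑' m : ℕ, (‖q‖ ^ (n + 1)) ^ (m + 1)
          = ‖q‖ ^ (n + 1) * (1 - ‖q‖ ^ (n + 1))⁻¹ := by
        have h1 : ∀ m : ℕ, (‖q‖ ^ (n + 1)) ^ (m + 1)
            = ‖q‖ ^ (n + 1) * (‖q‖ ^ (n + 1)) ^ m := fun m => by rw [pow_succ]; ring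
        rw [tsum_congr h1, tsum_mul_left, tsum_geometric_of_lt_one (by positivity) hw]
      rw [hgs]; ring
    rw [hcalc]
    apply mul_le_mul_of_nonneg_left
    · apply inv_anti₀
      · linarith
      · have : ‖q‖ ^ (n + 1) ≤ ‖q‖ := by
          apply pow_le_of_le_one (norm_nonneg q) hq.le (Nat.succ_ne_zero n)
        linarith
    · positivity
  apply Summable.of_nonneg_of_le (fun n => tsum_nonneg fun m => norm_nonneg _) hbound
  apply Summable.mul_right
  have h : Summable fun n : ℕ => (n : ℝ) ^ 1 * ‖q‖ ^ n :=
    summable_pow_mul_geometric_of_norm_lt_one 1 (by simpa using hq)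
  have hs := (summable_nat_add_iff 1).mpr h
  apply hs.congr
  intro n
  push_cast
  ring

omit hq in
lemma G_comp : F q = G q ∘ (fun p : ℕ × ℕ => (p.1 + 1, p.2 + 1)) := by
  funext p
  simp [F, G, Nat.succ_ne_zero]

omit hq in
lemma G_vanish : ∀ p : ℕ × ℕ, p ∉ Set.range (fun p : ℕ × ℕ => (p.1 + 1, p.2 + 1)) → G q p = 0 := by
  intro p hp
  rcases p with ⟨a, b⟩
  rcases Nat.eq_zero_or_pos b with hb | hb
  · simp [G, hb]
  rcases Nat.eq_zero_or_pos a with ha | ha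
  · simp [G, ha]
  exfalso
  exact hp ⟨(a - 1, b - 1), by simp [Nat.sub_add_cancel ha, Nat.sub_add_cancel hb]⟩

omit hq in
lemma inj_shift : Function.Injective (fun p : ℕ × ℕ => (p.1 + 1, p.2 + 1)) := by
  intro p q h
  simp only [Prod.mk.injEq] at h
  exact Prod.ext (by omega) (by omega)

lemma summable_G : Summable (G q) := by
  rw [← Function.Injective.summable_iff inj_shift (fun p hp => G_vanish p hp)]
  have := (summable_F hq).congr (fun p => congrFun (G_comp (q := q)) p)
  exact this

lemma tsum_F_eq_tsum_G : ∑' p, F q p = ∑' p, G q p := by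
  rw [G_comp (q := q)]
  apply Function.Injective.tsum_eq inj_shift
  intro p hp
  by_contra hmem
  exact hp (G_vanish p hmem)

omit hq in
lemma tsum_geom_shift {w : ℂ} (hw : ‖w‖ < 1) :
    ∑' m : ℕ, w ^ (m + 1) = w * (1 - w)⁻¹ := by
  have h : ∀ m : ℕ, w ^ (m + 1) = w * w ^ m := fun m => by rw [pow_succ]; ring
  rw [tsum_congr h, tsum_mul_left, tsum_geometric_of_norm_lt_one hw]

lemma fiber_sum (c : ℕ) :
    (∑' p : (fun p : ℕ × ℕ => p.1 * p.2) ⁻¹' {c}, G q (p : ℕ × ℕ)) = (sigma1 c : ℂ) * q ^ c := by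
  rcases Nat.eq_zero_or_pos c with rfl | hc
  · have hz : ∀ p : (fun p : ℕ × ℕ => p.1 * p.2) ⁻¹' {(0:ℕ)}, G q (p : ℕ × ℕ) = 0 := by
      rintro ⟨p, hp⟩
      simp only [Set.mem_preimage, Set.mem_singleton_iff] at hp
      rcases Nat.mul_eq_zero.mp hp with h | h
      · simp [G, h]
      · simp [G, h]
    rw [tsum_congr hz, tsum_zero]
    simp [sigma1]
  · have hc' : c ≠ 0 := hc.ne'
    have hset : (fun p : ℕ × ℕ => p.1 * p.2) ⁻¹' {c} = (c.divisorsAntidiagonal : Set (ℕ × ℕ)) := by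
      ext p
      simp [Nat.mem_divisorsAntidiagonal, hc']
    rw [hset, Finset.tsum_subtype']
    have hterm : ∀ p ∈ c.divisorsAntidiagonal, G q p = (p.1 : ℂ) * q ^ c := by
      intro p hp
      obtain ⟨h1, h2⟩ := Nat.mem_divisorsAntidiagonal.mp hp
      have hp2 : ¬ p.2 = 0 := by
        intro h
        rw [h, mul_zero] at h1
        exact h2 h1.symm
      simp only [G, hp2, if_false, h1]
    rw [Finset.sum_congr rfl hterm, ← Finset.sum_mul]
    congr 1
    rw [← Nat.cast_sum]
    congr 1
    rw [Nat.sum_divisorsAntidiagonal (fun a _ => a)]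
    rfl

lemma lambert : ∑' n : ℕ, ((n : ℂ) + 1) * q ^ (n + 1) / (1 - q ^ (n + 1))
    = ∑' k : ℕ, (sigma1 (k + 1) : ℂ) * q ^ (k + 1) := by
  have hF := summable_F hq
  have hrow : ∀ n : ℕ, ∑' m : ℕ, F q (n, m)
      = ((n : ℂ) + 1) * q ^ (n + 1) / (1 - q ^ (n + 1)) := by
    intro n
    have hw : ‖q ^ (n + 1)‖ < 1 := by
      rw [norm_pow]; exact pow_lt_one₀ (norm_nonneg q) hq (Nat.succ_ne_zero n)
    have hterm : ∀ m : ℕ, F q (n, m) = ((n : ℂ) + 1) * (q ^ (n + 1)) ^ (m + 1) := by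
      intro m; simp only [F]; rw [← pow_mul]; push_cast; ring
    rw [tsum_congr hterm, tsum_mul_left, tsum_geom_shift hw, div_eq_mul_inv]
    ring
  have hL : ∑' p, F q p = ∑' n : ℕ, ((n : ℂ) + 1) * q ^ (n + 1) / (1 - q ^ (n + 1)) := by
    rw [Summable.tsum_prod' hF (fun n => hF.prod_factor n)]
    exact tsum_congr hrow
  have hfib := (summable_G hq).hasSum.tsum_fiberwise (fun p : ℕ × ℕ => p.1 * p.2)
  have hfib' : HasSum (fun c : ℕ => (sigma1 c : ℂ) * q ^ c) (∑' p, G q p) := by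
    rwa [funext (fun c => fiber_sum hq c)] at hfib
  have h0 : ∑' c : ℕ, (sigma1 c : ℂ) * q ^ c
      = ∑' k : ℕ, (sigma1 (k + 1) : ℂ) * q ^ (k + 1) := by
    rw [Summable.tsum_eq_zero_add hfib'.summable]
    simp [sigma1]
  rw [← hL, tsum_F_eq_tsum_G hq, ← hfib'.tsum_eq, h0]

end Lambert

private noncomputable def gl (n : ℕ) (z : ℂ) : ℂ := Complex.log (1 - qc z ^ (n + 1))

private noncomputable def gl' (n : ℕ) (z : ℂ) : ℂ :=
  -(((n + 1 : ℕ) : ℂ) * qc z ^ n * (qc z * (2 * (Real.pi : ℂ) * Complex.I))) /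
    (1 - qc z ^ (n + 1))

lemma qc_hasDerivAt (z : ℂ) :
    HasDerivAt qc (qc z * (2 * (Real.pi : ℂ) * Complex.I)) z := by
  have h : HasDerivAt (fun w : ℂ => 2 * (Real.pi : ℂ) * Complex.I * w)
      (2 * (Real.pi : ℂ) * Complex.I) z := by
    simpa using (hasDerivAt_id z).const_mul (2 * (Real.pi : ℂ) * Complex.I)
  have := h.cexp
  exact this

lemma gl_hasDerivAt {n : ℕ} {z : ℂ} (hz : ‖qc z‖ < 1) :
    HasDerivAt (gl n) (gl' n z) z := by
  have hq1 : ‖qc z ^ (n + 1)‖ < 1 := by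
    rw [norm_pow]; exact pow_lt_one₀ (norm_nonneg _) hz (Nat.succ_ne_zero n)
  have hpow : HasDerivAt (fun w => qc w ^ (n + 1))
      (((n + 1 : ℕ) : ℂ) * qc z ^ n * (qc z * (2 * (Real.pi : ℂ) * Complex.I))) z := by
    have h := (qc_hasDerivAt z).pow (n + 1)
    rw [Nat.add_sub_cancel] at h
    exact h
  have hsub := hpow.const_sub 1
  have hlog := hsub.clog (one_sub_mem hq1)
  exact hlog

lemma eta_eq_exp {z : ℂ} (hz : 0 < z.im) :
    _root_.eta z = Complex.exp ((Real.pi : ℂ) * Complex.I * z / 12 + ∑' n, gl n z) := by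
  have h2 := Complex.cexp_tsum_eq_tprod
    (f := fun n => 1 - qc z ^ (n + 1))
    (fun n => one_sub_ne (by
      rw [norm_pow]
      exact pow_lt_one₀ (norm_nonneg _) (norm_qc_lt_one hz) (Nat.succ_ne_zero n)))
    (summable_log (norm_qc_lt_one hz))
  rw [_root_.eta, Complex.exp_add, ← h2]
  rfl

lemma logDeriv_eta {τ : ℂ} (hτ : 0 < τ.im) :
    deriv _root_.eta τ / _root_.eta τ = (Real.pi : ℂ) * Complex.I / 12
      - 2 * (Real.pi : ℂ) * Complex.I * ∑' k : ℕ, (sigma1 (k + 1) : ℂ) * qc τ ^ (k + 1) := by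
  have hpi := Real.pi_pos
  set a : ℝ := τ.im / 2 with ha
  have ha0 : 0 < a := half_pos hτ
  set r : ℝ := Real.exp (-(2 * Real.pi * a)) with hr
  have hr0 : 0 < r := Real.exp_pos _
  have hr1 : r < 1 := by
    apply Real.exp_lt_one_iff.mpr; nlinarith
  set t : Set ℂ := {z : ℂ | a < z.im} with ht
  have hot : IsOpen t := isOpen_lt continuous_const Complex.continuous_im
  have hpt : IsPreconnected t := (convex_halfSpace_im_gt a).isPreconnected
  have hτt : τ ∈ t := by
    simp only [ht, Set.mem_setOf_eq, ha]; linarith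
  have hmem : ∀ z ∈ t, ‖qc z‖ ≤ r := by
    intro z hz
    rw [norm_qc, hr]
    apply Real.exp_le_exp.mpr
    have hz' : a < z.im := hz
    nlinarith
  have hqlt : ∀ z ∈ t, ‖qc z‖ < 1 := fun z hz => lt_of_le_of_lt (hmem z hz) hr1
  set u : ℕ → ℝ := fun n => (2 * Real.pi / (1 - r)) * (((n + 1 : ℕ) : ℝ) * r ^ (n + 1))
    with hu
  have hu_sum : Summable u := by
    apply Summable.mul_left
    have h : Summable fun n : ℕ => (n : ℝ) ^ 1 * r ^ n :=
      summable_pow_mul_geometric_of_norm_lt_one 1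
        (by rw [Real.norm_eq_abs, abs_of_pos hr0]; exact hr1)
    have hs := (summable_nat_add_iff 1).mpr h
    apply hs.congr
    intro n; push_cast; ring
  have hgd : ∀ (n : ℕ), ∀ z ∈ t, HasDerivAt (gl n) (gl' n z) z :=
    fun n z hz => gl_hasDerivAt (hqlt z hz)
  have hgb : ∀ (n : ℕ), ∀ z ∈ t, ‖gl' n z‖ ≤ u n := by
    intro n z hz
    have hqr : ‖qc z‖ ≤ r := hmem z hz
    have hpow : ‖qc z‖ ^ (n + 1) ≤ r ^ (n + 1) :=
      pow_le_pow_left₀ (norm_nonneg _) hqr (n + 1)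
    have hrpow : r ^ (n + 1) ≤ r := pow_le_of_le_one hr0.le hr1.le (Nat.succ_ne_zero n)
    have hD : 1 - r ≤ ‖1 - qc z ^ (n + 1)‖ := by
      have h1 : ‖qc z ^ (n + 1)‖ ≤ r := by
        rw [norm_pow]; exact le_trans hpow hrpow
      have := norm_one_sub_ge (w := qc z ^ (n + 1))
      linarith
    have hnum : ‖-(((n + 1 : ℕ) : ℂ) * qc z ^ n * (qc z * (2 * (Real.pi : ℂ) * Complex.I)))‖
        = ((n + 1 : ℕ) : ℝ) * ‖qc z‖ ^ n * (‖qc z‖ * (2 * Real.pi)) := by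
      rw [norm_neg, norm_mul, norm_mul, norm_pow, norm_mul, Complex.norm_natCast]
      congr 2
      simp [abs_of_pos hpi]
    have hXY : ((n + 1 : ℕ) : ℝ) * ‖qc z‖ ^ n * (‖qc z‖ * (2 * Real.pi))
        ≤ ((n + 1 : ℕ) : ℝ) * r ^ (n + 1) * (2 * Real.pi) := by
      have key := mul_le_mul_of_nonneg_left hpow
        (show (0:ℝ) ≤ ((n + 1 : ℕ) : ℝ) * (2 * Real.pi) by positivity)
      calc ((n + 1 : ℕ) : ℝ) * ‖qc z‖ ^ n * (‖qc z‖ * (2 * Real.pi))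
          = ((n + 1 : ℕ) : ℝ) * (2 * Real.pi) * ‖qc z‖ ^ (n + 1) := by rw [pow_succ]; ring
        _ ≤ ((n + 1 : ℕ) : ℝ) * (2 * Real.pi) * r ^ (n + 1) := key
        _ = ((n + 1 : ℕ) : ℝ) * r ^ (n + 1) * (2 * Real.pi) := by ring
    calc ‖gl' n z‖
        = ‖-(((n + 1 : ℕ) : ℂ) * qc z ^ n * (qc z * (2 * (Real.pi : ℂ) * Complex.I)))‖ /
            ‖1 - qc z ^ (n + 1)‖ := by rw [gl', norm_div]
      _ ≤ (((n + 1 : ℕ) : ℝ) * r ^ (n + 1) * (2 * Real.pi)) / (1 - r) := by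
          rw [hnum]
          exact div_le_div₀ (by positivity) hXY (by linarith) hD
      _ = u n := by rw [hu]; ring
  have hg0 : Summable fun n => gl n τ := summable_log (hqlt τ hτt)
  have hL : HasDerivAt (fun z => ∑' n, gl n z) (∑' n, gl' n τ) τ :=
    hasDerivAt_tsum_of_isPreconnected hu_sum hot hpt hgd hgb hτt hg0 hτt
  have hlin : HasDerivAt (fun z : ℂ => (Real.pi : ℂ) * Complex.I * z / 12)
      ((Real.pi : ℂ) * Complex.I / 12) τ := by
    have h := (hasDerivAt_id τ).const_mul ((Real.pi : ℂ) * Complex.I / 12)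
    have heq : (fun z : ℂ => (Real.pi : ℂ) * Complex.I * z / 12)
        = fun z : ℂ => (Real.pi : ℂ) * Complex.I / 12 * z := by
      funext z; ring
    rw [heq]
    simpa using h
  have hexp := (hlin.add hL).cexp
  have hev : _root_.eta =ᶠ[nhds τ]
      fun z => Complex.exp ((Real.pi : ℂ) * Complex.I * z / 12 + ∑' n, gl n z) := by
    filter_upwards [(isOpen_lt continuous_const Complex.continuous_im).mem_nhds
      (show τ ∈ {z : ℂ | 0 < z.im} from hτ)] with z hz
    exact eta_eq_exp hz
  have hderiv : deriv _root_.eta τ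
      = Complex.exp ((Real.pi : ℂ) * Complex.I * τ / 12 + ∑' n, gl n τ) *
        ((Real.pi : ℂ) * Complex.I / 12 + ∑' n, gl' n τ) := by
    rw [hev.deriv_eq]
    exact hexp.deriv
  have hSval : ∑' n, gl' n τ
      = -(2 * (Real.pi : ℂ) * Complex.I) *
          ∑' k : ℕ, (sigma1 (k + 1) : ℂ) * qc τ ^ (k + 1) := by
    have h1 : ∀ n : ℕ, gl' n τ
        = -(2 * (Real.pi : ℂ) * Complex.I) *
            (((n : ℂ) + 1) * qc τ ^ (n + 1) / (1 - qc τ ^ (n + 1))) := by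
      intro n
      simp only [gl']
      rw [pow_succ]
      push_cast
      ring
    rw [tsum_congr h1, tsum_mul_left, lambert (hqlt τ hτt)]
  rw [hderiv, eta_eq_exp hτ, mul_comm, mul_div_assoc,
    div_self (Complex.exp_ne_zero _), mul_one, hSval]
  ring


end Stmt9

section
open Stmt9

/-- the Lambert-type `q`-expansion of
`Λ_N(τ) = N·q(d/dq)log(η(Nτ)/η(τ))`:
`(N/(2πi))(N·η′(Nτ)/η(Nτ) - η′(τ)/η(τ)) = N(N-1)/24 + N∑_{k≥1}σ₁(k)(q^k - Nq^{Nk})`. -/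
theorem stmt_9 (N : ℕ) (hN : 0 < N) (τ : ℂ) (hτ : 0 < τ.im) :
    (N : ℂ) / (2 * Real.pi * Complex.I) *
        ((N : ℂ) * deriv eta ((N : ℂ) * τ) / eta ((N : ℂ) * τ) - deriv eta τ / eta τ) =
      (N : ℂ) * ((N : ℂ) - 1) / 24 +
        (N : ℂ) * ∑' k : ℕ, (sigma1 (k + 1) : ℂ) *
          (qc τ ^ (k + 1) - (N : ℂ) * qc τ ^ (N * (k + 1))) := by
  have hq : ‖qc τ‖ < 1 := norm_qc_lt_one hτ
  have hNτ : 0 < ((N : ℂ) * τ).im := by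
    have : ((N : ℂ) * τ).im = (N : ℝ) * τ.im := by
      simp [Complex.mul_im]
    rw [this]
    have : (0:ℝ) < (N : ℝ) := by exact_mod_cast hN
    positivity
  have hqN : qc ((N : ℂ) * τ) = qc τ ^ N := by
    rw [qc, qc, show 2 * (Real.pi : ℂ) * Complex.I * ((N : ℂ) * τ)
      = (N : ℂ) * (2 * (Real.pi : ℂ) * Complex.I * τ) by ring, Complex.exp_nat_mul]
  have hqNnorm : ‖qc τ ^ N‖ < 1 := by
    rw [norm_pow]
    exact pow_lt_one₀ (norm_nonneg _) hq hN.ne'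
  have h1 := logDeriv_eta hτ
  have h2 := logDeriv_eta hNτ
  have h2' : deriv eta ((N : ℂ) * τ) / eta ((N : ℂ) * τ)
      = (Real.pi : ℂ) * Complex.I / 12 - 2 * (Real.pi : ℂ) * Complex.I *
          ∑' k : ℕ, (sigma1 (k + 1) : ℂ) * qc τ ^ (N * (k + 1)) := by
    rw [h2]
    congr 2
    apply tsum_congr
    intro k
    rw [hqN, ← pow_mul]
  have hA : Summable fun k : ℕ => (sigma1 (k + 1) : ℂ) * qc τ ^ (k + 1) :=
    summable_sigma_mul hq
  have hB : Summable fun k : ℕ => (sigma1 (k + 1) : ℂ) * qc τ ^ (N * (k + 1)) := by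
    have := summable_sigma_mul hqNnorm
    apply this.congr
    intro k
    rw [← pow_mul]
  have hsplit : ∑' k : ℕ, (sigma1 (k + 1) : ℂ) *
        (qc τ ^ (k + 1) - (N : ℂ) * qc τ ^ (N * (k + 1)))
      = (∑' k : ℕ, (sigma1 (k + 1) : ℂ) * qc τ ^ (k + 1))
        - (N : ℂ) * ∑' k : ℕ, (sigma1 (k + 1) : ℂ) * qc τ ^ (N * (k + 1)) := by
    have hstep : ∀ k : ℕ, (sigma1 (k + 1) : ℂ) *
          (qc τ ^ (k + 1) - (N : ℂ) * qc τ ^ (N * (k + 1)))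
        = (sigma1 (k + 1) : ℂ) * qc τ ^ (k + 1)
          - (N : ℂ) * ((sigma1 (k + 1) : ℂ) * qc τ ^ (N * (k + 1))) := by
      intro k; ring
    rw [tsum_congr hstep, Summable.tsum_sub hA (hB.mul_left _), tsum_mul_left]
  rw [h1, mul_div_assoc, h2', hsplit]
  have hπ : ((Real.pi : ℂ)) ≠ 0 := by
    exact_mod_cast Complex.ofReal_ne_zero.mpr Real.pi_ne_zero
  have hI : Complex.I ≠ 0 := Complex.I_ne_zero
  field_simp
  ring

end
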